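/- If g(c·M·e^{(β+γ)+γ}) is integrable, then g(c·M)·R_1·R_2 is integrable and E[g(c·M)·R_1·R_2] = E[g(c·M·e^{(β+γ)+γ})]·e^{γ}. (That is, E[g(F_T)·(M_T/M_{t_i})·(M_T/M_{t_j})] = E[g(F_T·e^{∫_{t_i}^{T}σ² + ∫_{t_j}^{T}σ²})]·e^{∫_{max(t_i,t_j)}^{T} σ²} for dividend dates t_i ≤ t_j.) -/

import Mathlib

open MeasureTheory ProbabilityTheory Real
open scoped ENNReal NNReal

lemma gaussian_tilt (v : ℝ≥0) (a : ℝ) :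
    (gaussianReal 0 v).withDensity
      (fun x => ENNReal.ofReal (Real.exp (a * x - a ^ 2 * v / 2)))
      = gaussianReal (a * v) v := by
  by_cases hv : v = 0
  · subst hv
    simp only [NNReal.coe_zero, mul_zero, zero_div, sub_zero, gaussianReal_zero_var]
    ext s hs
    classical
    rw [withDensity_apply _ hs, setLIntegral_dirac' (by fun_prop) hs]
    by_cases h0 : (0:ℝ) ∈ s <;>
      simp [Set.indicator, h0, Measure.dirac_apply' _ hs]
  · rw [gaussianReal_of_var_ne_zero _ hv, gaussianReal_of_var_ne_zero _ hv,
      ← withDensity_mul _ (measurable_gaussianPDF _ _) (by fun_prop)]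
    congr 1
    ext x
    have hvne : (v:ℝ) ≠ 0 := by exact_mod_cast hv
    simp only [Pi.mul_apply, gaussianPDF_def,
      ← ENNReal.ofReal_mul (gaussianPDFReal_nonneg 0 v x)]
    congr 1
    unfold gaussianPDFReal
    rw [mul_assoc, ← Real.exp_add]
    congr 2
    field_simp
    ring

lemma prod_withDensity_eq {A B : Type*} [MeasurableSpace A] [MeasurableSpace B]
    {μ : Measure A} {ν : Measure B} [SigmaFinite μ] [SigmaFinite ν]
    {μ' : Measure A} {ν' : Measure B} [SigmaFinite μ'] [SigmaFinite ν']
    {f : A → ℝ≥0∞} {g : B → ℝ≥0∞} (hf : Measurable f) (hg : Measurable g)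
    (h1 : μ.withDensity f = μ') (h2 : ν.withDensity g = ν') :
    (μ.prod ν).withDensity (fun p => f p.1 * g p.2) = μ'.prod ν' := by
  subst h1
  subst h2
  refine (Measure.prod_eq fun s t hs ht => ?_).symm
  rw [withDensity_apply _ (hs.prod ht), ← Measure.prod_restrict,
    lintegral_prod_mul hf.aemeasurable hg.aemeasurable,
    withDensity_apply _ hs, withDensity_apply _ ht]

theorem statement5 {Ω : Type*} [MeasurableSpace Ω] (P : Measure Ω) [IsProbabilityMeasure P]
    (α β γ : ℝ) (hα : 0 ≤ α) (hβ : 0 ≤ β) (hγ : 0 ≤ γ)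
    (X Y Z : Ω → ℝ) (hX : Measurable X) (hY : Measurable Y) (hZ : Measurable Z)
    (hindep : iIndepFun ![X, Y, Z] P)
    (hXlaw : Measure.map X P = gaussianReal 0 α.toNNReal)
    (hYlaw : Measure.map Y P = gaussianReal 0 β.toNNReal)
    (hZlaw : Measure.map Z P = gaussianReal 0 γ.toNNReal)
    (g : ℝ → ℝ) (hg : Measurable g) (c : ℝ)
    (hInt : Integrable
      (fun ω => g (c * Real.exp (X ω + Y ω + Z ω - (α + β + γ) / 2)
        * Real.exp ((β + γ) + γ))) P) :
    Integrable
        (fun ω => g (c * Real.exp (X ω + Y ω + Z ω - (α + β + γ) / 2))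
          * Real.exp (Y ω + Z ω - (β + γ) / 2) * Real.exp (Z ω - γ / 2)) P ∧
      ∫ ω, g (c * Real.exp (X ω + Y ω + Z ω - (α + β + γ) / 2))
          * Real.exp (Y ω + Z ω - (β + γ) / 2) * Real.exp (Z ω - γ / 2) ∂P
        = (∫ ω, g (c * Real.exp (X ω + Y ω + Z ω - (α + β + γ) / 2)
            * Real.exp ((β + γ) + γ)) ∂P) * Real.exp γ := by
  have hβc : ((β.toNNReal : ℝ)) = β := Real.coe_toNNReal β hβ
  have hγc : ((γ.toNNReal : ℝ)) = γ := Real.coe_toNNReal γ hγ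
  -- tilted one-dimensional gaussians
  have tY : (gaussianReal 0 β.toNNReal).withDensity
      (fun y => ENNReal.ofReal (Real.exp (y - β / 2))) = gaussianReal β β.toNNReal := by
    have h := gaussian_tilt β.toNNReal 1
    rw [show (fun x => ENNReal.ofReal (Real.exp (1 * x - 1 ^ 2 * (β.toNNReal:ℝ) / 2)))
        = fun y => ENNReal.ofReal (Real.exp (y - β / 2)) from by
      funext x; rw [hβc]; norm_num] at h
    rwa [show (1:ℝ) * (β.toNNReal:ℝ) = β by rw [hβc]; ring] at h
  have tZ : (gaussianReal 0 γ.toNNReal).withDensity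
      (fun z => ENNReal.ofReal (Real.exp (2 * z - 2 * γ))) = gaussianReal (2 * γ) γ.toNNReal := by
    have h := gaussian_tilt γ.toNNReal 2
    rw [show (fun x => ENNReal.ofReal (Real.exp (2 * x - 2 ^ 2 * (γ.toNNReal:ℝ) / 2)))
        = fun z => ENNReal.ofReal (Real.exp (2 * z - 2 * γ)) from by
      funext x; rw [hγc]; congr 2; ring] at h
    rwa [show (2:ℝ) * (γ.toNNReal:ℝ) = 2 * γ by rw [hγc]] at h
  -- joint law
  have hm : ∀ i, Measurable (![X, Y, Z] i) := by
    intro i; fin_cases i <;> simpa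
  have hYZindep : IndepFun Y Z P := hindep.indepFun (show (1:Fin 3) ≠ 2 by decide)
  have hYZmap : P.map (fun ω => (Y ω, Z ω))
      = (gaussianReal 0 β.toNNReal).prod (gaussianReal 0 γ.toNNReal) := by
    rw [← hYlaw, ← hZlaw]
    exact (indepFun_iff_map_prod_eq_prod_map_map hY.aemeasurable hZ.aemeasurable).mp hYZindep
  have hXp : IndepFun X (fun ω => (Y ω, Z ω)) P :=
    (hindep.indepFun_prodMk hm 1 2 0 (by decide) (by decide)).symm
  set μ3 : Measure (ℝ × ℝ × ℝ) := (gaussianReal 0 α.toNNReal).prod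
      ((gaussianReal 0 β.toNNReal).prod (gaussianReal 0 γ.toNNReal)) with hμ3
  have hTmap : P.map (fun ω => (X ω, (Y ω, Z ω))) = μ3 := by
    rw [hμ3, ← hXlaw, ← hYZmap]
    exact (indepFun_iff_map_prod_eq_prod_map_map hX.aemeasurable
      (hY.prodMk hZ).aemeasurable).mp hXp
  have hT : AEMeasurable (fun ω => (X ω, (Y ω, Z ω))) P :=
    (hX.prodMk (hY.prodMk hZ)).aemeasurable
  -- the function H and the density
  set H : ℝ × ℝ × ℝ → ℝ :=
    fun p => g (c * Real.exp (p.1 + p.2.1 + p.2.2 - (α + β + γ) / 2)) with hH_def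
  have hH : Measurable H := hg.comp (by fun_prop)
  set DN : ℝ × ℝ × ℝ → ℝ≥0 :=
    fun p => (Real.exp (p.2.1 - β / 2) * Real.exp (2 * p.2.2 - 2 * γ)).toNNReal with hDN_def
  have hDN : Measurable DN := by fun_prop
  -- the tilted measure equals a shifted product measure
  have hwd : μ3.withDensity (fun p => ((DN p : ℝ≥0) : ℝ≥0∞))
      = (gaussianReal 0 α.toNNReal).prod
        ((gaussianReal β β.toNNReal).prod (gaussianReal (2 * γ) γ.toNNReal)) := by
    have hd : (fun p : ℝ × ℝ × ℝ => ((DN p : ℝ≥0) : ℝ≥0∞))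
        = fun p => (fun _ : ℝ => (1:ℝ≥0∞)) p.1 *
            ((fun q : ℝ × ℝ => (fun y => ENNReal.ofReal (Real.exp (y - β / 2))) q.1 *
              (fun z => ENNReal.ofReal (Real.exp (2 * z - 2 * γ))) q.2) p.2) := by
      funext p
      simp only [hDN_def, one_mul]
      rw [← ENNReal.ofReal_mul (Real.exp_pos _).le]
      rfl
    have haux1 : (gaussianReal 0 α.toNNReal).withDensity (fun _ : ℝ => (1:ℝ≥0∞))
        = gaussianReal 0 α.toNNReal := by simp
    have hinner : ((gaussianReal 0 β.toNNReal).prod (gaussianReal 0 γ.toNNReal)).withDensity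
        (fun q : ℝ × ℝ => (fun y => ENNReal.ofReal (Real.exp (y - β / 2))) q.1 *
          (fun z => ENNReal.ofReal (Real.exp (2 * z - 2 * γ))) q.2)
        = (gaussianReal β β.toNNReal).prod (gaussianReal (2 * γ) γ.toNNReal) :=
      prod_withDensity_eq (f := fun y => ENNReal.ofReal (Real.exp (y - β / 2)))
        (g := fun z => ENNReal.ofReal (Real.exp (2 * z - 2 * γ)))
        (by fun_prop) (by fun_prop) tY tZ
    rw [hd, hμ3]
    exact prod_withDensity_eq (f := fun _ : ℝ => (1:ℝ≥0∞))
      (g := fun q : ℝ × ℝ => (fun y => ENNReal.ofReal (Real.exp (y - β / 2))) q.1 *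
        (fun z => ENNReal.ofReal (Real.exp (2 * z - 2 * γ))) q.2)
      measurable_one (by fun_prop) haux1 hinner
  -- shifted product measure as a pushforward
  set e : (ℝ × ℝ × ℝ) ≃ᵐ (ℝ × ℝ × ℝ) :=
    (MeasurableEquiv.refl ℝ).prodCongr
      ((MeasurableEquiv.addRight β).prodCongr (MeasurableEquiv.addRight (2 * γ))) with he_def
  have hΦ : ⇑e = Prod.map (id : ℝ → ℝ) (Prod.map (· + β) (· + 2 * γ)) := by
    funext p; rfl
  have hmape : μ3.withDensity (fun p => ((DN p : ℝ≥0) : ℝ≥0∞)) = μ3.map e := by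
    rw [hwd, hΦ, hμ3]
    have h1 : gaussianReal β β.toNNReal = (gaussianReal 0 β.toNNReal).map (· + β) := by
      rw [gaussianReal_map_add_const, zero_add]
    have h2 : gaussianReal (2 * γ) γ.toNNReal
        = (gaussianReal 0 γ.toNNReal).map (· + 2 * γ) := by
      rw [gaussianReal_map_add_const, zero_add]
    rw [h1, h2, Measure.map_prod_map _ _ (by fun_prop) (by fun_prop)]
    rw [show gaussianReal 0 α.toNNReal
        = (gaussianReal 0 α.toNNReal).map (id : ℝ → ℝ) from (Measure.map_id).symm]
    rw [Measure.map_prod_map _ _ (by fun_prop) (by fun_prop)]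
    simp [Measure.map_id]
  -- the integrand of hInt is (H ∘ e) ∘ T
  have hfun1 : (fun ω => g (c * Real.exp (X ω + Y ω + Z ω - (α + β + γ) / 2)
        * Real.exp ((β + γ) + γ)))
      = fun ω => H (e (X ω, (Y ω, Z ω))) := by
    funext ω
    simp only [hΦ, Prod.map, hH_def, id_eq]
    congr 1
    rw [mul_assoc, ← Real.exp_add]
    congr 1
    ring
  have hsm0 : Measurable (fun p : ℝ × ℝ × ℝ => DN p • H p) := by
    simp only [NNReal.smul_def]
    exact hDN.coe_nnreal_real.mul hH
  -- chain of integrability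
  have h1 : Integrable (H ∘ ⇑e) μ3 := by
    rw [← hTmap, integrable_map_measure (hH.comp e.measurable).aestronglyMeasurable hT]
    convert hInt using 1
    exact hfun1.symm
  have h2 : Integrable H (μ3.map e) :=
    (MeasurableEquiv.measurableEmbedding e).integrable_map_iff.mpr h1
  have h3 : Integrable H (μ3.withDensity (fun p => ((DN p : ℝ≥0) : ℝ≥0∞))) := by
    rw [hmape]; exact h2
  have h4 : Integrable (fun p => DN p • H p) μ3 :=
    (integrable_withDensity_iff_integrable_smul hDN).mp h3
  have h4' : Integrable (fun p => DN p • H p) (P.map (fun ω => (X ω, (Y ω, Z ω)))) := by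
    rw [hTmap]; exact h4
  have h5 : Integrable ((fun p : ℝ × ℝ × ℝ => DN p • H p) ∘ fun ω => (X ω, (Y ω, Z ω))) P :=
    (integrable_map_measure hsm0.aestronglyMeasurable hT).mp h4'
  -- target integrand in terms of DN • H
  have hfun2 : (fun ω => g (c * Real.exp (X ω + Y ω + Z ω - (α + β + γ) / 2))
        * Real.exp (Y ω + Z ω - (β + γ) / 2) * Real.exp (Z ω - γ / 2))
      = fun ω => Real.exp γ * (DN (X ω, (Y ω, Z ω)) • H (X ω, (Y ω, Z ω))) := by
    have key : ∀ G y z : ℝ, G * rexp (y + z - (β + γ) / 2) * rexp (z - γ / 2)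
        = rexp γ * (rexp (y - β / 2) * rexp (2 * z - 2 * γ) * G) := by
      intro G y z
      rw [mul_assoc, ← Real.exp_add, ← Real.exp_add, ← mul_assoc, ← Real.exp_add,
        show y + z - (β + γ) / 2 + (z - γ / 2) = γ + (y - β / 2 + (2 * z - 2 * γ)) from by ring,
        mul_comm]
    funext ω
    have hpos : (0:ℝ) ≤ Real.exp (Y ω - β / 2) * Real.exp (2 * Z ω - 2 * γ) := by positivity
    simp only [hDN_def, hH_def, NNReal.smul_def, Real.coe_toNNReal _ hpos]
    exact key _ (Y ω) (Z ω)
  constructor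
  · rw [hfun2]
    exact h5.const_mul _
  · rw [hfun2]
    calc ∫ ω, Real.exp γ * (DN (X ω, (Y ω, Z ω)) • H (X ω, (Y ω, Z ω))) ∂P
        = Real.exp γ * ∫ ω, DN (X ω, (Y ω, Z ω)) • H (X ω, (Y ω, Z ω)) ∂P :=
          integral_const_mul _ _
      _ = Real.exp γ * ∫ p, DN p • H p ∂(P.map (fun ω => (X ω, (Y ω, Z ω)))) := by
          rw [integral_map hT hsm0.aestronglyMeasurable]
      _ = Real.exp γ * ∫ p, H p ∂(μ3.withDensity (fun p => ((DN p : ℝ≥0) : ℝ≥0∞))) := by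
          rw [hTmap, integral_withDensity_eq_integral_smul hDN]
      _ = Real.exp γ * ∫ p, H (e p) ∂μ3 := by
          rw [hmape, (MeasurableEquiv.measurableEmbedding e).integral_map]
      _ = Real.exp γ * ∫ ω, H (e (X ω, (Y ω, Z ω))) ∂P := by
          have hHe : Measurable (fun p : ℝ × ℝ × ℝ => H (e p)) := hH.comp e.measurable
          rw [← hTmap, integral_map hT hHe.aestronglyMeasurable]
      _ = (∫ ω, g (c * Real.exp (X ω + Y ω + Z ω - (α + β + γ) / 2)
            * Real.exp ((β + γ) + γ)) ∂P) * Real.exp γ := by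
          rw [← hfun1, mul_comm]
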